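/- Over F_2, for the matrix M = [[1,1],[0,1]], the eigenspace of M^T ⊗ M^T ⊗ M^{-1} for eigenvalue 1 has dimension 4, and hence M has exactly 2⁴ = 16 fixed points in Mat_2(F_2)² under the action φ. -/
import Mathlib


open Matrix Kronecker

variable {K : Type*} [Field K] {n : ℕ}

/-- The multiplication of the algebra `alg(M)` on `K^n`:
`e_i * e_j = ∑ k, (M i) j k • e_k`. -/
def algMul (M : Fin n → Matrix (Fin n) (Fin n) K) (x y : Fin n → K) : Fin n → K :=
  fun k => ∑ i, ∑ j, x i * y j * M i j k

/-- The right action `φ` of `GL n K` on tuples of matrices: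
`φ(M, G)_l = G⁻¹ (∑ i, G_{il} M_i) G`. -/
def phi (M : Fin n → Matrix (Fin n) (Fin n) K) (G : GL (Fin n) K) :
    Fin n → Matrix (Fin n) (Fin n) K :=
  fun l => (↑G⁻¹ : Matrix (Fin n) (Fin n) K) *
    (∑ i, (G : Matrix (Fin n) (Fin n) K) i l • M i) * (G : Matrix (Fin n) (Fin n) K)

/-- Dimension of the eigenspace of `Mᵀ ⊗ Mᵀ ⊗ M⁻¹` for the eigenvalue 1. -/
noncomputable def eigdim (M : GL (Fin n) K) : ℕ :=
  Module.finrank K ↥(Module.End.eigenspace (Matrix.toLin'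
    ((M : Matrix (Fin n) (Fin n) K)ᵀ ⊗ₖ
      ((M : Matrix (Fin n) (Fin n) K)ᵀ ⊗ₖ (↑M⁻¹ : Matrix (Fin n) (Fin n) K)))) 1)

/-- For `M = [[1,1],[0,1]]` over `F₂`: `dim Eig₁(Mᵀ ⊗ Mᵀ ⊗ M⁻¹) = 4`, hence `M`
has exactly `2⁴ = 16` fixed points under `φ`. -/
theorem jordan_block_fixedPoints :
    ∀ M : GL (Fin 2) (ZMod 2),
      (M : Matrix (Fin 2) (Fin 2) (ZMod 2)) = !![1,1;0,1] →
      eigdim M = 4 ∧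
      Nat.card {N : Fin 2 → Matrix (Fin 2) (Fin 2) (ZMod 2) // phi N M = N} = 16 := by
  intro M hM
  have h2 : M * M = 1 := by
    ext : 1
    rw [Units.val_mul, hM]
    decide
  have hMinv : (↑M⁻¹ : Matrix (Fin 2) (Fin 2) (ZMod 2)) = !![1,1;0,1] := by
    rw [inv_eq_of_mul_eq_one_right h2, hM]
  constructor
  · unfold eigdim
    set A : Matrix (Fin 2 × Fin 2 × Fin 2) (Fin 2 × Fin 2 × Fin 2) (ZMod 2) :=
      (!![1,1;0,1] : Matrix (Fin 2) (Fin 2) (ZMod 2))ᵀ ⊗ₖ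
        ((!![1,1;0,1] : Matrix (Fin 2) (Fin 2) (ZMod 2))ᵀ ⊗ₖ !![1,1;0,1]) with hA
    rw [hM, hMinv]
    letI : Fintype ↥(Module.End.eigenspace (Matrix.toLin' A) 1) := Fintype.ofFinite _
    have e : ↥(Module.End.eigenspace (Matrix.toLin' A) 1) ≃ {v // A.mulVec v = v} :=
      Equiv.subtypeEquivRight (fun v => by
        rw [Module.End.mem_eigenspace_iff, Matrix.toLin'_apply, one_smul])
    have hcard : Fintype.card ↥(Module.End.eigenspace (Matrix.toLin' A) 1) = 16 := by
      rw [Fintype.card_congr e]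
      decide
    have hpow := Module.card_eq_pow_finrank (K := ZMod 2)
      (V := ↥(Module.End.eigenspace (Matrix.toLin' A) 1))
    rw [hcard, ZMod.card] at hpow
    have : (16 : ℕ) = 2 ^ 4 := by norm_num
    rw [this] at hpow
    exact (Nat.pow_right_injective (le_refl 2) hpow.symm)
  · have key : ∀ N : Fin 2 → Matrix (Fin 2) (Fin 2) (ZMod 2),
        phi N M = N ↔ (fun l => (!![1,1;0,1] : Matrix (Fin 2) (Fin 2) (ZMod 2)) *
          (∑ i, (!![1,1;0,1] : Matrix (Fin 2) (Fin 2) (ZMod 2)) i l • N i) * !![1,1;0,1]) = N := by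
      intro N
      unfold phi
      rw [hM, hMinv]
    rw [Nat.card_congr (Equiv.subtypeEquivRight key), Nat.card_eq_fintype_card]
    decide
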